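/- Let H₂⁺(t) = y_b + [−λr/(2λr y_b − λ − μ) + (1/(s₂ − y_b) + λr/(2λr y_b − λ − μ)) e^{−(2 y_b λ r − λ − μ)t}]^{-1}, where y_b = (λ+μ+√((λ+μ)² − 4λμr))/(2λr), λ, μ > 0, 0 < r < 1, s₂ ∈ (0,1). Then on an interval around 0 where the bracket is nonzero, H₂⁺ solves d/dt H₂⁺ = λ r (H₂⁺)² − (λ+μ) H₂⁺ + μ with H₂⁺(0) = s₂. -/

import Mathlib

/-- The closed form `H₂⁺` of Theorem 1 solves the Riccati backward equation
`d/dt H₂⁺ = λ r (H₂⁺)² − (λ+μ) H₂⁺ + μ` with `H₂⁺(0) = s₂`, on an interval where the bracket is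
nonzero. -/
theorem stmt9 (lam mu r s2 : ℝ) (hlam : 0 < lam) (hmu : 0 < mu)
    (hr : r ∈ Set.Ioo (0 : ℝ) 1) (hs2 : s2 ∈ Set.Ioo (0 : ℝ) 1) :
    let yb : ℝ := (lam + mu + Real.sqrt ((lam + mu) ^ 2 - 4 * lam * mu * r)) / (2 * lam * r)
    let B : ℝ → ℝ := fun t =>
      -(lam * r) / (2 * lam * r * yb - lam - mu) +
        (1 / (s2 - yb) + lam * r / (2 * lam * r * yb - lam - mu)) *
          Real.exp (-(2 * yb * lam * r - lam - mu) * t)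
    let H : ℝ → ℝ := fun t => yb + (B t)⁻¹
    H 0 = s2 ∧ ∀ t : ℝ, B t ≠ 0 →
      HasDerivAt H (lam * r * (H t) ^ 2 - (lam + mu) * H t + mu) t := by
  obtain ⟨hr0, hr1⟩ := hr
  obtain ⟨hs0, hs1⟩ := hs2
  intro yb B H
  have hlne : lam ≠ 0 := hlam.ne'
  have hrne : r ≠ 0 := hr0.ne'
  have harg : 0 < (lam + mu) ^ 2 - 4 * lam * mu * r := by
    nlinarith [sq_nonneg (lam - mu), mul_pos (mul_pos hlam hmu) (sub_pos.2 hr1)]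
  set D : ℝ := Real.sqrt ((lam + mu) ^ 2 - 4 * lam * mu * r) with hDdef
  have hD2 : D ^ 2 = (lam + mu) ^ 2 - 4 * lam * mu * r := Real.sq_sqrt harg.le
  have hDpos : 0 < D := Real.sqrt_pos.mpr harg
  have h2lr : (0:ℝ) < 2 * lam * r := by positivity
  have hybdef : yb = (lam + mu + D) / (2 * lam * r) := rfl
  set c : ℝ := 2 * lam * r * yb - lam - mu with hcdef
  have hcD : c = D := by
    rw [hcdef, hybdef]; field_simp; ring
  have hcpos : 0 < c := hcD ▸ hDpos
  have hcne : c ≠ 0 := hcpos.ne'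
  have hroot : lam * r * yb ^ 2 - (lam + mu) * yb + mu = 0 := by
    rw [hybdef]
    field_simp
    nlinarith [hD2]
  have hyb1 : 1 < yb := by
    rw [hybdef, lt_div_iff₀ h2lr]
    nlinarith [hD2, hDpos, mul_pos (mul_pos hlam hr0) (sub_pos.2 hr1),
      sq_nonneg (D + (2 * lam * r - lam - mu))]
  have hsne : s2 - yb ≠ 0 := by nlinarith
  set A : ℝ := 1 / (s2 - yb) + lam * r / c with hAdef
  have hBdef : B = fun u =>
      -(lam * r) / c + A * Real.exp (-c * u) := by
    funext u
    show -(lam * r) / (2 * lam * r * yb - lam - mu) +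
        (1 / (s2 - yb) + lam * r / (2 * lam * r * yb - lam - mu)) *
          Real.exp (-(2 * yb * lam * r - lam - mu) * u) = _
    rw [hAdef, hcdef]
    ring_nf
  have hHdef : H = fun u => yb + (B u)⁻¹ := rfl
  constructor
  · have hB0 : B 0 = 1 / (s2 - yb) := by
      rw [hBdef]; simp; rw [hAdef, one_div]; ring
    rw [hHdef]
    simp only [hB0, one_div, inv_inv]
    ring
  · intro t hBt
    have hBteq : B t = -(lam * r) / c + A * Real.exp (-c * t) := by rw [hBdef]
    have hBd : HasDerivAt B (-c * A * Real.exp (-c * t)) t := by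
      rw [hBdef]
      have h1 : HasDerivAt (fun u : ℝ => -c * u) (-c) t := by
        simpa using (hasDerivAt_id t).const_mul (-c)
      have h2 := (h1.exp.const_mul A).const_add (-(lam * r) / c)
      exact h2.congr_deriv (by ring)
    have hHd : HasDerivAt H (c * A * Real.exp (-c * t) / (B t) ^ 2) t := by
      rw [hHdef]
      have := (hBd.inv hBt).const_add yb
      exact this.congr_deriv (by ring)
    convert hHd using 1
    have hAe : A * Real.exp (-c * t) = B t + lam * r / c := by
      rw [hBteq]; ring
    have h2 : c * A * Real.exp (-c * t) = c * B t + lam * r := by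
      calc c * A * Real.exp (-c * t) = c * (A * Real.exp (-c * t)) := by ring
        _ = c * (B t + lam * r / c) := by rw [hAe]
        _ = c * B t + lam * r := by field_simp
    rw [hHdef]
    simp only
    rw [h2, eq_div_iff (pow_ne_zero 2 hBt)]
    have hinv : (B t)⁻¹ * B t = 1 := inv_mul_cancel₀ hBt
    linear_combination (B t) ^ 2 * hroot +
      (2 * lam * r * yb * B t - (lam + mu) * B t + lam * r * ((B t)⁻¹ * B t + 1)) * hinv -
      B t * hcdef
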